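/- Let P_1,…,P_s ∈ ℤ[x] (s ≥ 2) be nonzero coprime one-variable polynomials, and set d_n = gcd(P_1(n),…,P_s(n)) for n ∈ ℤ. Then the set 𝒟 = {d_n : n ∈ ℤ} is a finite set, stable under gcd and under lcm: for all n, m ∈ ℤ there exist n', n'' ∈ ℤ with gcd(d_n, d_m) = d_{n'} and lcm(d_n, d_m) = d_{n''}. -/

import Mathlib

open Polynomial


lemma bezout_int (s : ℕ) (hs : 2 ≤ s) (P : Fin s → Polynomial ℤ)
    (hP : ∀ i, P i ≠ 0)
    (hcop : ∀ D : Polynomial ℚ,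
      (∀ i, D ∣ (P i).map (Int.castRingHom ℚ)) → D.natDegree = 0) :
    ∃ N : ℕ, 0 < N ∧ ∀ n : ℤ, (Finset.univ.gcd fun i => (P i).eval n) ∣ (N : ℤ) := by
  haveI : NeZero s := ⟨by omega⟩
  set Q : Fin s → Polynomial ℚ := fun i => (P i).map (Int.castRingHom ℚ) with hQ
  have hQne : ∀ i, Q i ≠ 0 := fun i =>
    (Polynomial.map_ne_zero_iff (by exact Int.cast_injective)).2 (hP i)
  -- the span of the Q i is all of ℚ[X]
  set I : Ideal (Polynomial ℚ) := Ideal.span (Set.range Q) with hI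
  have hIQ : ∀ i, Q i ∈ I := fun i => Ideal.subset_span ⟨i, rfl⟩
  have hItop : I = ⊤ := by
    obtain ⟨g, hg⟩ := (IsPrincipalIdealRing.principal I)
    have hgne : g ≠ 0 := by
      rintro rfl
      have := hIQ 0
      rw [hg, Ideal.submodule_span_eq, Ideal.span_singleton_eq_bot.mpr rfl] at this
      exact hQne 0 (by simpa using this)
    have hgdvd : ∀ i, g ∣ Q i := fun i => by
      have := hIQ i
      rwa [hg, Ideal.submodule_span_eq, Ideal.mem_span_singleton] at this
    have hdeg : g.natDegree = 0 := hcop g hgdvd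
    have : IsUnit g := by
      rw [Polynomial.isUnit_iff]
      exact ⟨g.coeff 0, isUnit_iff_ne_zero.2 (by
        intro h0
        apply hgne
        rw [Polynomial.eq_C_of_natDegree_eq_zero hdeg, h0, map_zero]), 
        (Polynomial.eq_C_of_natDegree_eq_zero hdeg).symm⟩
    rw [hg, Ideal.submodule_span_eq, Ideal.span_singleton_eq_top]
    exact this
  have h1 : (1 : Polynomial ℚ) ∈ I := hItop ▸ Submodule.mem_top
  rw [hI, Ideal.mem_span_range_iff_exists_fun] at h1
  obtain ⟨q, hq⟩ := h1
  -- clear denominators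
  have hden : ∀ i : Fin s, ∃ b : ℤ, b ≠ 0 ∧ ∃ U : Polynomial ℤ,
      U.map (Int.castRingHom ℚ) = Polynomial.C (b : ℚ) * q i := by
    intro i
    obtain ⟨b, hb⟩ := IsLocalization.integerNormalization_map_to_map
      (nonZeroDivisors ℤ) (q i)
    refine ⟨(b : ℤ), nonZeroDivisors.coe_ne_zero b,
      IsLocalization.integerNormalization (nonZeroDivisors ℤ) (q i), ?_⟩
    have : (algebraMap ℤ ℚ) = Int.castRingHom ℚ := by rfl
    rw [← this, hb, zsmul_eq_mul, ← Polynomial.C_eq_intCast]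
  choose b hb U hU using hden
  set B : ℤ := ∏ i, b i with hB
  have hBne : B ≠ 0 := Finset.prod_ne_zero_iff.2 fun i _ => hb i
  -- the integer combination
  have hcomb : ∑ i, (Polynomial.C (∏ j ∈ Finset.univ.erase i, b j) * U i * P i)
      = Polynomial.C B := by
    apply Polynomial.map_injective (Int.castRingHom ℚ) (by exact Int.cast_injective)
    rw [Polynomial.map_sum, Polynomial.map_C]
    have : ∀ i : Fin s,
        ((Polynomial.C (∏ j ∈ Finset.univ.erase i, b j) * U i * P i).map
          (Int.castRingHom ℚ))
        = Polynomial.C (B : ℚ) * (q i * Q i) := by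
      intro i
      rw [Polynomial.map_mul, Polynomial.map_mul, Polynomial.map_C, hU i]
      have hBc : ((Int.castRingHom ℚ) (∏ j ∈ Finset.univ.erase i, b j)) * ((b i : ℚ))
          = (B : ℚ) := by
        have h := Finset.prod_erase_mul Finset.univ b (Finset.mem_univ i)
        show ((∏ j ∈ Finset.univ.erase i, b j : ℤ) : ℚ) * ((b i : ℤ) : ℚ) = (B : ℚ)
        rw [← Int.cast_mul, h]
      rw [← hBc, Polynomial.C_mul]
      ring
    rw [Finset.sum_congr rfl (fun i _ => this i), ← Finset.mul_sum, hq, mul_one]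
    rfl
  refine ⟨B.natAbs, Int.natAbs_pos.2 hBne, fun n => ?_⟩
  rw [Int.dvd_natAbs]
  have := congrArg (Polynomial.eval n) hcomb
  rw [Polynomial.eval_finset_sum, Polynomial.eval_C] at this
  rw [← this]
  apply Finset.dvd_sum
  intro i _
  simp only [Polynomial.eval_mul]
  exact Dvd.dvd.mul_left (Finset.gcd_dvd (Finset.mem_univ i)) _

lemma key_val (s : ℕ) (P : Fin s → Polynomial ℤ) (N : ℕ) (hN : N ≠ 0)
    (hdvd : ∀ n : ℤ, (Finset.univ.gcd fun i => (P i).eval n) ∣ (N : ℤ))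
    (hF0 : ∀ n : ℤ, (Finset.univ.gcd fun i => (P i).eval n).natAbs ≠ 0)
    (p : ℕ) (hp : p.Prime) (n n' : ℤ)
    (h : (p : ℤ) ^ (2 * N.factorization p) ∣ n' - n) :
    ((Finset.univ.gcd fun i => (P i).eval n').natAbs).factorization p
      = ((Finset.univ.gcd fun i => (P i).eval n).natAbs).factorization p := by
  have claim : ∀ m m' : ℤ, (p : ℤ) ^ (2 * N.factorization p) ∣ m' - m →
      ((Finset.univ.gcd fun i => (P i).eval m).natAbs).factorization p
        ≤ ((Finset.univ.gcd fun i => (P i).eval m').natAbs).factorization p := by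
    intro m m' hmm
    have hFdvdN : (Finset.univ.gcd fun i => (P i).eval m).natAbs ∣ N := by
      rw [← Int.natAbs_natCast N]
      exact Int.natAbs_dvd_natAbs.mpr (hdvd m)
    have hvleN : ((Finset.univ.gcd fun i => (P i).eval m).natAbs).factorization p
        ≤ N.factorization p :=
      (Nat.factorization_le_iff_dvd (hF0 m) hN).2 hFdvdN p
    set v := ((Finset.univ.gcd fun i => (P i).eval m).natAbs).factorization p with hv
    have hvle : v ≤ 2 * N.factorization p := by omega
    have hpv1 : ((p ^ v : ℕ) : ℤ) ∣ (Finset.univ.gcd fun i => (P i).eval m) := by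
      have h1 : p ^ v ∣ (Finset.univ.gcd fun i => (P i).eval m).natAbs :=
        Nat.ordProj_dvd _ _
      exact dvd_trans (Int.natCast_dvd_natCast.mpr h1) (Int.natAbs_dvd.mpr dvd_rfl)
    have hpv2 : ((p ^ v : ℕ) : ℤ) ∣ m' - m := by
      push_cast
      exact dvd_trans (pow_dvd_pow _ hvle) hmm
    have hgcd' : ((p ^ v : ℕ) : ℤ) ∣ (Finset.univ.gcd fun i => (P i).eval m') := by
      apply Finset.dvd_gcd
      intro i _
      have h3 : ((p ^ v : ℕ) : ℤ) ∣ (P i).eval m' - (P i).eval m :=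
        dvd_trans hpv2 (Polynomial.sub_dvd_eval_sub m' m (P i))
      have h4 : ((p ^ v : ℕ) : ℤ) ∣ (P i).eval m :=
        dvd_trans hpv1 (Finset.gcd_dvd (Finset.mem_univ i))
      have := dvd_add h3 h4
      simpa using this
    have h5 : p ^ v ∣ (Finset.univ.gcd fun i => (P i).eval m').natAbs := by
      rw [← Int.natAbs_cast (p ^ v)]
      exact Int.natAbs_dvd_natAbs.mpr hgcd'
    exact (hp.pow_dvd_iff_le_factorization (hF0 m')).1 h5
  refine le_antisymm (claim n' n ?_) (claim n n' h)
  rw [show n - n' = -(n' - n) by ring]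
  exact dvd_neg.mpr h

lemma crt_mix (N : ℕ) (S : Finset ℕ) (hS : S ⊆ N.primeFactors) (n m : ℤ) :
    ∃ n' : ℤ, (∀ p ∈ S, (p : ℤ) ^ (2 * N.factorization p) ∣ n' - n) ∧
      (∀ p ∈ N.primeFactors, p ∉ S → (p : ℤ) ^ (2 * N.factorization p) ∣ n' - m) := by
  set a : ℕ := ∏ p ∈ S, p ^ (2 * N.factorization p) with ha
  set b : ℕ := ∏ p ∈ N.primeFactors \ S, p ^ (2 * N.factorization p) with hb
  have hab : Nat.Coprime a b := by
    apply Nat.Coprime.prod_left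
    intro p hp
    apply Nat.Coprime.prod_right
    intro q hq
    have hpq : p ≠ q := by
      rintro rfl
      exact (Finset.mem_sdiff.1 hq).2 hp
    exact Nat.Coprime.pow _ _ ((Nat.coprime_primes (Nat.prime_of_mem_primeFactors (hS hp))
      (Nat.prime_of_mem_primeFactors (Finset.mem_sdiff.1 hq).1)).2 hpq)
  have : IsCoprime (a : ℤ) (b : ℤ) :=
    Int.isCoprime_iff_gcd_eq_one.mpr (by rw [Int.gcd_natCast_natCast]; exact hab)
  obtain ⟨u, v, huv⟩ := this
  refine ⟨n * (v * b) + m * (u * a), ?_, ?_⟩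
  · intro p hp
    have h1 : (p : ℤ) ^ (2 * N.factorization p) ∣ (a : ℤ) := by
      have := Finset.dvd_prod_of_mem (fun p => p ^ (2 * N.factorization p)) hp
      exact_mod_cast Int.natCast_dvd_natCast.mpr this
    exact dvd_trans h1 ⟨(m - n) * u, by linear_combination n * huv⟩
  · intro p hpN hpS
    have h1 : (p : ℤ) ^ (2 * N.factorization p) ∣ (b : ℤ) := by
      have := Finset.dvd_prod_of_mem (fun p => p ^ (2 * N.factorization p))
        (Finset.mem_sdiff.2 ⟨hpN, hpS⟩)
      exact_mod_cast Int.natCast_dvd_natCast.mpr this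
    exact dvd_trans h1 ⟨(n - m) * v, by linear_combination m * huv⟩

lemma reach (s : ℕ) (P : Fin s → Polynomial ℤ) (N : ℕ) (hN : N ≠ 0)
    (hdvd : ∀ n : ℤ, (Finset.univ.gcd fun i => (P i).eval n) ∣ (N : ℤ))
    (hF0 : ∀ n : ℤ, (Finset.univ.gcd fun i => (P i).eval n).natAbs ≠ 0)
    (n m : ℤ) (cond : ℕ → Prop) [DecidablePred cond] :
    ∃ n' : ℤ, ∀ p : ℕ,
      ((Finset.univ.gcd fun i => (P i).eval n').natAbs).factorization p
        = if cond p then ((Finset.univ.gcd fun i => (P i).eval n).natAbs).factorization p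
          else ((Finset.univ.gcd fun i => (P i).eval m).natAbs).factorization p := by
  have hvle : ∀ (k : ℤ) (p : ℕ),
      ((Finset.univ.gcd fun i => (P i).eval k).natAbs).factorization p
        ≤ N.factorization p := by
    intro k p
    have hFdvdN : (Finset.univ.gcd fun i => (P i).eval k).natAbs ∣ N := by
      rw [← Int.natAbs_natCast N]
      exact Int.natAbs_dvd_natAbs.mpr (hdvd k)
    exact (Nat.factorization_le_iff_dvd (hF0 k) hN).2 hFdvdN p
  set S : Finset ℕ := N.primeFactors.filter cond with hSdef
  obtain ⟨n', hn'1, hn'2⟩ := crt_mix N S (Finset.filter_subset _ _) n m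
  refine ⟨n', fun p => ?_⟩
  by_cases hpp : p.Prime
  · by_cases hpN : p ∈ N.primeFactors
    · by_cases hc : cond p
      · rw [if_pos hc]
        exact key_val s P N hN hdvd hF0 p hpp n n'
          (hn'1 p (Finset.mem_filter.2 ⟨hpN, hc⟩))
      · rw [if_neg hc]
        exact key_val s P N hN hdvd hF0 p hpp m n'
          (hn'2 p hpN (fun hmem => hc (Finset.mem_filter.1 hmem).2))
    · have he : N.factorization p = 0 := by
        rw [← Finsupp.notMem_support_iff, Nat.support_factorization]
        exact hpN
      have h1 := hvle n' p
      have h2 := hvle n p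
      have h3 := hvle m p
      rw [he] at h1 h2 h3
      split <;> omega
  · simp [Nat.factorization_eq_zero_of_not_prime _ hpp]

/-- For nonzero coprime one-variable polynomials, the set of gcds of values
is finite and stable under gcd and lcm. -/
theorem stmt8 (s : ℕ) (hs : 2 ≤ s)
    (P : Fin s → Polynomial ℤ) (hP : ∀ i, P i ≠ 0)
    (hcop : ∀ D : Polynomial ℚ,
      (∀ i, D ∣ (P i).map (Int.castRingHom ℚ)) → D.natDegree = 0) :
    (Set.range fun n : ℤ => Finset.univ.gcd fun i => (P i).eval n).Finite ∧
    ∀ n m : ℤ,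
      (∃ n' : ℤ,
        gcd (Finset.univ.gcd fun i => (P i).eval n) (Finset.univ.gcd fun i => (P i).eval m)
          = Finset.univ.gcd fun i => (P i).eval n') ∧
      (∃ n'' : ℤ,
        lcm (Finset.univ.gcd fun i => (P i).eval n) (Finset.univ.gcd fun i => (P i).eval m)
          = Finset.univ.gcd fun i => (P i).eval n'') := by

  classical
  obtain ⟨N, hNpos, hdvd⟩ := bezout_int s hs P hP hcop
  have hN : N ≠ 0 := hNpos.ne'
  have hd0 : ∀ n : ℤ, (Finset.univ.gcd fun i => (P i).eval n) ≠ 0 := by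
    intro n h0
    have := hdvd n
    rw [h0, zero_dvd_iff] at this
    exact hN (by exact_mod_cast this)
  have hF0 : ∀ n : ℤ, (Finset.univ.gcd fun i => (P i).eval n).natAbs ≠ 0 :=
    fun n => Int.natAbs_ne_zero.mpr (hd0 n)
  have hdnn : ∀ n : ℤ, (Finset.univ.gcd fun i => (P i).eval n)
      = (((Finset.univ.gcd fun i => (P i).eval n).natAbs : ℕ) : ℤ) := by
    intro n
    rw [Int.natCast_natAbs, Int.abs_eq_normalize, Finset.normalize_gcd]
  constructor
  · apply Set.Finite.subset (Set.finite_Icc (0 : ℤ) (N : ℤ))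
    rintro x ⟨n, rfl⟩
    simp only [Set.mem_Icc]
    refine ⟨by rw [hdnn n]; exact Int.natCast_nonneg _, ?_⟩
    exact Int.le_of_dvd (by exact_mod_cast hNpos) (hdvd n)
  · intro n m
    constructor
    · obtain ⟨n', hn'⟩ := reach s P N hN hdvd hF0 n m
        (fun p => ((Finset.univ.gcd fun i => (P i).eval n).natAbs).factorization p
          ≤ ((Finset.univ.gcd fun i => (P i).eval m).natAbs).factorization p)
      refine ⟨n', ?_⟩
      have hgne : Nat.gcd (Finset.univ.gcd fun i => (P i).eval n).natAbs
          (Finset.univ.gcd fun i => (P i).eval m).natAbs ≠ 0 :=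
        fun h => hF0 n (Nat.eq_zero_of_gcd_eq_zero_left h)
      have hkey : (Finset.univ.gcd fun i => (P i).eval n').natAbs
          = Nat.gcd (Finset.univ.gcd fun i => (P i).eval n).natAbs
            (Finset.univ.gcd fun i => (P i).eval m).natAbs := by
        apply Nat.eq_of_factorization_eq (hF0 n') hgne
        intro p
        rw [hn' p, Nat.factorization_gcd (hF0 n) (hF0 m), Finsupp.inf_apply]
        split <;> omega
      rw [hdnn n, hdnn m, hdnn n', ← Int.coe_gcd, Int.gcd_natCast_natCast]
      exact_mod_cast hkey.symm
    · obtain ⟨n'', hn''⟩ := reach s P N hN hdvd hF0 n m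
        (fun p => ((Finset.univ.gcd fun i => (P i).eval m).natAbs).factorization p
          ≤ ((Finset.univ.gcd fun i => (P i).eval n).natAbs).factorization p)
      refine ⟨n'', ?_⟩
      have hlne : Nat.lcm (Finset.univ.gcd fun i => (P i).eval n).natAbs
          (Finset.univ.gcd fun i => (P i).eval m).natAbs ≠ 0 :=
        Nat.lcm_ne_zero (hF0 n) (hF0 m)
      have hkey : (Finset.univ.gcd fun i => (P i).eval n'').natAbs
          = Nat.lcm (Finset.univ.gcd fun i => (P i).eval n).natAbs
            (Finset.univ.gcd fun i => (P i).eval m).natAbs := by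
        apply Nat.eq_of_factorization_eq (hF0 n'') hlne
        intro p
        rw [hn'' p, Nat.factorization_lcm (hF0 n) (hF0 m), Finsupp.sup_apply]
        split <;> omega
      rw [hdnn n, hdnn m, hdnn n'', ← Int.coe_lcm, Int.lcm_natCast_natCast]
      exact_mod_cast hkey.symm
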